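/- A posteriori suboptimality estimate: Let μ_N be a feedback with associated closed-loop trajectory x(i+1) = f(x(i), μ_N(x(i))). Suppose V_N: X → ℝ≥0 satisfies V_N(x(i)) ≥ V_N(x(i+1)) + α·l(x(i), μ_N(x(i))) for some α ∈ (0,1] and all i ∈ ℕ, and suppose V_N(y) ≤ V_∞(y) for all states y on the trajectory. Then α·V_∞(x(i)) ≤ α·V_∞^{μ_N}(x(i)) ≤ V_N(x(i)) ≤ V_∞(x(i)) for all i, where V_∞^{μ_N}(x(i)) = ∑_{j=i}^∞ l(x(j), μ_N(x(j))). -/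

import Mathlib

open scoped ENNReal NNReal

/-- The trajectory generated by control sequence `u` from initial state `x0`. -/
def traj {X U : Type*} (f : X → U → X) (x0 : X) (u : ℕ → U) : ℕ → X
  | 0 => x0
  | k + 1 => f (traj f x0 u k) (u k)

/-- Infinite-horizon optimal value function. -/
noncomputable def Vinf {X U : Type*} (f : X → U → X) (l : X → U → ℝ≥0) (x : X) : ℝ≥0∞ :=
  ⨅ u : ℕ → U, ∑' i : ℕ, (l (traj f x u i) (u i) : ℝ≥0∞)

/-- A posteriori suboptimality estimate: under the relaxed Lyapunov inequality with
`V_N ≤ V_∞` along the trajectory, `α V_∞(x(i)) ≤ α V_∞^{μ_N}(x(i)) ≤ V_N(x(i)) ≤ V_∞(x(i))`,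
where `V_∞^{μ_N}(x(i)) = ∑_{j=i}^∞ l(x(j), μ_N(x(j)))`. -/
theorem stmt_4 {X U : Type*} (f : X → U → X) (μN : X → U) (l : X → U → ℝ≥0)
    (VN : X → ℝ≥0) (x : ℕ → X)
    (hx : ∀ i, x (i + 1) = f (x i) (μN (x i)))
    (α : ℝ≥0) (hα0 : 0 < α) (hα1 : α ≤ 1)
    (hLyap : ∀ i : ℕ, VN (x (i + 1)) + α * l (x i) (μN (x i)) ≤ VN (x i))
    (hVN : ∀ i : ℕ, (VN (x i) : ℝ≥0∞) ≤ Vinf f l (x i)) :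
    ∀ i : ℕ,
      (α : ℝ≥0∞) * Vinf f l (x i)
          ≤ (α : ℝ≥0∞) * ∑' j : ℕ, (l (x (i + j)) (μN (x (i + j))) : ℝ≥0∞) ∧
      (α : ℝ≥0∞) * ∑' j : ℕ, (l (x (i + j)) (μN (x (i + j))) : ℝ≥0∞) ≤ (VN (x i) : ℝ≥0∞) ∧
      (VN (x i) : ℝ≥0∞) ≤ Vinf f l (x i) := by
  intro i
  -- the closed-loop control sequence starting at time i
  set u : ℕ → U := fun j => μN (x (i + j)) with hu
  have htraj : ∀ j, traj f (x i) u j = x (i + j) := by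
    intro j
    induction j with
    | zero => rfl
    | succ k ih =>
        show f (traj f (x i) u k) (u k) = x (i + (k + 1))
        rw [ih, show i + (k + 1) = (i + k) + 1 from rfl, hx (i + k)]
  refine ⟨?_, ?_, hVN i⟩
  · refine mul_le_mul_right ?_ _
    have : Vinf f l (x i) ≤ ∑' j : ℕ, (l (traj f (x i) u j) (u j) : ℝ≥0∞) :=
      iInf_le _ u
    simpa [htraj] using this
  · -- partial sums telescoping
    have key : ∀ n : ℕ, VN (x (i + n)) + α * ∑ j ∈ Finset.range n, l (x (i + j)) (μN (x (i + j))) ≤ VN (x i) := by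
      intro n
      induction n with
      | zero => simp
      | succ k ih =>
        calc VN (x (i + (k + 1))) + α * ∑ j ∈ Finset.range (k + 1), l (x (i + j)) (μN (x (i + j)))
            = (VN (x (i + k + 1)) + α * l (x (i + k)) (μN (x (i + k))))
              + α * ∑ j ∈ Finset.range k, l (x (i + j)) (μN (x (i + j))) := by
              rw [Finset.sum_range_succ, show i + (k + 1) = i + k + 1 from rfl]; ring
          _ ≤ VN (x (i + k)) + α * ∑ j ∈ Finset.range k, l (x (i + j)) (μN (x (i + j))) := by
              exact add_le_add (hLyap (i + k)) le_rfl
          _ ≤ VN (x i) := ih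
    rw [← ENNReal.tsum_mul_left]
    rw [ENNReal.tsum_eq_iSup_sum]
    refine iSup_le fun s => ?_
    set n := s.sup id + 1 with hn
    refine le_trans (Finset.sum_le_sum_of_subset
      (fun a ha => Finset.mem_range.2 (Nat.lt_succ_of_le (Finset.le_sup (f := id) ha)))) ?_
    have := key n
    have h2 : α * ∑ j ∈ Finset.range n, l (x (i + j)) (μN (x (i + j))) ≤ VN (x i) :=
      le_trans (le_add_self) this
    calc ∑ j ∈ Finset.range n, (α : ℝ≥0∞) * (l (x (i + j)) (μN (x (i + j))) : ℝ≥0∞)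
        = ((α * ∑ j ∈ Finset.range n, l (x (i + j)) (μN (x (i + j))) : ℝ≥0) : ℝ≥0∞) := by
          push_cast [Finset.mul_sum]; ring_nf
      _ ≤ (VN (x i) : ℝ≥0∞) := by exact_mod_cast h2
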